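/- Let T ≥ 1, Ḡ > 0, and Q > 0, and fix vectors φ_{ω,t} ∈ ℝ^K with ‖φ_{ω,t}‖_∞ ≤ Q and rewards g_{ω,t} ∈ [0, Ḡ] for ω ∈ [Ω], t ∈ [T]. Then the function Ĵ: (ℝ^K)^T → ℝ defined by Ĵ(b) = (1/Ω) Σ_{ω=1}^Ω Σ_{t=1}^T g_{ω,t} · ∏_{t'=1}^{t-1}(1 - σ(⟨b_{t'}, φ_{ω,t'}⟩)) · σ(⟨b_t, φ_{ω,t}⟩) is Lipschitz continuous with constant Ḡ·T²·Q with respect to the L¹ norm. -/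
import Mathlib


noncomputable def logistic (u : ℝ) : ℝ := Real.exp u / (1 + Real.exp u)

lemma logistic_nonneg (u : ℝ) : 0 ≤ logistic u := by
  unfold logistic
  positivity

lemma logistic_le_one (u : ℝ) : logistic u ≤ 1 := by
  unfold logistic
  have h := Real.exp_pos u
  rw [div_le_one (by positivity)]
  linarith

lemma logistic_lip (u v : ℝ) : |logistic u - logistic v| ≤ |u - v| := by
  wlog h : v ≤ u generalizing u v
  · rw [abs_sub_comm, abs_sub_comm u v]; exact this v u (le_of_not_ge h)
  have h1 : (0:ℝ) < 1 + Real.exp v := by positivity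
  have h2 : (0:ℝ) < 1 + Real.exp u := by positivity
  have hb : logistic v ≤ logistic u := by
    unfold logistic
    have he := Real.exp_le_exp.2 h
    rw [div_le_div_iff₀ h1 h2]
    nlinarith
  rw [abs_of_nonneg (by linarith), abs_of_nonneg (by linarith)]
  unfold logistic
  rw [div_sub_div _ _ (ne_of_gt h2) (ne_of_gt h1), div_le_iff₀ (by positivity)]
  have hexp : Real.exp v = Real.exp u * Real.exp (v - u) := by
    rw [← Real.exp_add]; ring_nf
  have key : Real.exp u - Real.exp v ≤ Real.exp u * (u - v) := by
    nlinarith [Real.add_one_le_exp (v - u), Real.exp_pos u]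
  nlinarith [Real.exp_pos u, Real.exp_pos v,
    mul_nonneg (sub_nonneg.2 h)
      (by positivity : (0:ℝ) ≤ 1 + Real.exp v + Real.exp u * Real.exp v)]

lemma abs_prod_sub_prod {ι : Type*} (s : Finset ι) (f g : ι → ℝ)
    (hf : ∀ i ∈ s, |f i| ≤ 1) (hg : ∀ i ∈ s, |g i| ≤ 1) :
    |∏ i ∈ s, f i - ∏ i ∈ s, g i| ≤ ∑ i ∈ s, |f i - g i| := by
  induction s using Finset.cons_induction with
  | empty => simp
  | cons a s ha ih =>
    rw [Finset.prod_cons, Finset.prod_cons, Finset.sum_cons]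
    have hfa : |f a| ≤ 1 := hf a (Finset.mem_cons_self a s)
    have hP' : |∏ i ∈ s, g i| ≤ 1 := by
      rw [Finset.abs_prod]
      exact Finset.prod_le_one (fun i _ => abs_nonneg _)
        (fun i hi => hg i (Finset.mem_cons.2 (Or.inr hi)))
    have ih' := ih (fun i hi => hf i (Finset.mem_cons.2 (Or.inr hi)))
      (fun i hi => hg i (Finset.mem_cons.2 (Or.inr hi)))
    have hsplit : f a * ∏ i ∈ s, f i - g a * ∏ i ∈ s, g i
        = f a * (∏ i ∈ s, f i - ∏ i ∈ s, g i) + (f a - g a) * ∏ i ∈ s, g i := by ring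
    calc |f a * ∏ i ∈ s, f i - g a * ∏ i ∈ s, g i|
        ≤ |f a| * |∏ i ∈ s, f i - ∏ i ∈ s, g i| + |f a - g a| * |∏ i ∈ s, g i| := by
          rw [hsplit]
          exact (abs_add_le _ _).trans (by rw [abs_mul, abs_mul])
      _ ≤ |f a - g a| + ∑ i ∈ s, |f i - g i| := by
          nlinarith [abs_nonneg (f a - g a), abs_nonneg (∏ i ∈ s, f i - ∏ i ∈ s, g i),
            abs_nonneg (f a), abs_nonneg (∏ i ∈ s, g i)]

lemma step_bound (T : ℕ) (t : Fin T) (x x' : Fin T → ℝ) :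
    |(∏ t' ∈ Finset.Iio t, (1 - logistic (x t'))) * logistic (x t)
      - (∏ t' ∈ Finset.Iio t, (1 - logistic (x' t'))) * logistic (x' t)|
    ≤ ∑ s, |x s - x' s| := by
  set P := ∏ t' ∈ Finset.Iio t, (1 - logistic (x t')) with hP
  set P' := ∏ t' ∈ Finset.Iio t, (1 - logistic (x' t')) with hP'
  have habs1 : ∀ u : ℝ, |1 - logistic u| ≤ 1 := by
    intro u
    rw [abs_le]
    constructor <;> [linarith [logistic_le_one u]; linarith [logistic_nonneg u]]
  have hPd : |P - P'| ≤ ∑ t' ∈ Finset.Iio t, |x t' - x' t'| := by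
    refine le_trans (abs_prod_sub_prod _ _ _ (fun i _ => habs1 _) (fun i _ => habs1 _)) ?_
    refine Finset.sum_le_sum fun i _ => ?_
    have : (1 - logistic (x i)) - (1 - logistic (x' i)) = -(logistic (x i) - logistic (x' i)) := by ring
    rw [this, abs_neg]
    exact logistic_lip _ _
  have hσ : |logistic (x t) - logistic (x' t)| ≤ |x t - x' t| := logistic_lip _ _
  have hσ1 : |logistic (x t)| ≤ 1 := by
    rw [abs_of_nonneg (logistic_nonneg _)]; exact logistic_le_one _
  have hP'1 : |P'| ≤ 1 := by
    rw [hP', Finset.abs_prod]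
    exact Finset.prod_le_one (fun i _ => abs_nonneg _) (fun i _ => habs1 _)
  have hsplit : P * logistic (x t) - P' * logistic (x' t)
      = (P - P') * logistic (x t) + P' * (logistic (x t) - logistic (x' t)) := by ring
  have key : |P * logistic (x t) - P' * logistic (x' t)|
      ≤ (∑ t' ∈ Finset.Iio t, |x t' - x' t'|) + |x t - x' t| := by
    rw [hsplit]
    refine (abs_add_le _ _).trans ?_
    rw [abs_mul, abs_mul]
    nlinarith [abs_nonneg (P - P'), abs_nonneg P', abs_nonneg (logistic (x t)),
      abs_nonneg (logistic (x t) - logistic (x' t))]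
  refine key.trans ?_
  have hIic : (∑ t' ∈ Finset.Iio t, |x t' - x' t'|) + |x t - x' t|
      = ∑ t' ∈ Finset.Iic t, |x t' - x' t'| := by
    rw [← Finset.Iio_insert, Finset.sum_insert (by simp)]
    ring
  rw [hIic]
  exact Finset.sum_le_sum_of_subset_of_nonneg (Finset.subset_univ _)
    (fun i _ _ => abs_nonneg _)

theorem SAA_objective_lipschitz (Ω T K : ℕ) (hT : 1 ≤ T) (Gbar Q : ℝ)
    (hG : 0 < Gbar) (hQ : 0 < Q)
    (φ : Fin Ω → Fin T → Fin K → ℝ)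
    (hφ : ∀ ω t k, |φ ω t k| ≤ Q)
    (g : Fin Ω → Fin T → ℝ)
    (hg : ∀ ω t, g ω t ∈ Set.Icc (0 : ℝ) Gbar) :
    ∀ b b' : Fin T → Fin K → ℝ,
      |(1 / (Ω : ℝ)) * ∑ ω, ∑ t, g ω t *
          ((∏ t' ∈ Finset.Iio t, (1 - logistic (∑ k, b t' k * φ ω t' k))) *
            logistic (∑ k, b t k * φ ω t k)) -
        (1 / (Ω : ℝ)) * ∑ ω, ∑ t, g ω t *
          ((∏ t' ∈ Finset.Iio t, (1 - logistic (∑ k, b' t' k * φ ω t' k))) *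
            logistic (∑ k, b' t k * φ ω t k))| ≤
      Gbar * (T : ℝ) ^ 2 * Q * (∑ s, ∑ k, |b s k - b' s k|) := by
  intro b b'
  set S := ∑ s, ∑ k, |b s k - b' s k| with hSdef
  have hS0 : 0 ≤ S :=
    Finset.sum_nonneg fun _ _ => Finset.sum_nonneg fun _ _ => abs_nonneg _
  have hQS : 0 ≤ Q * S := mul_nonneg hQ.le hS0
  -- inner product difference bound per ω
  have hinner : ∀ (ω : Fin Ω),
      (∑ s, |(∑ k, b s k * φ ω s k) - (∑ k, b' s k * φ ω s k)|) ≤ Q * S := by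
    intro ω
    have hone : ∀ s : Fin T,
        |(∑ k, b s k * φ ω s k) - (∑ k, b' s k * φ ω s k)| ≤ Q * ∑ k, |b s k - b' s k| := by
      intro s
      rw [← Finset.sum_sub_distrib]
      calc |∑ k, (b s k * φ ω s k - b' s k * φ ω s k)|
          ≤ ∑ k, |b s k * φ ω s k - b' s k * φ ω s k| := Finset.abs_sum_le_sum_abs _ _
        _ = ∑ k, |b s k - b' s k| * |φ ω s k| := by
            refine Finset.sum_congr rfl fun k _ => ?_
            rw [← sub_mul, abs_mul]
        _ ≤ ∑ k, |b s k - b' s k| * Q :=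
            Finset.sum_le_sum fun k _ => mul_le_mul_of_nonneg_left (hφ ω s k) (abs_nonneg _)
        _ = Q * ∑ k, |b s k - b' s k| := by rw [Finset.mul_sum]; exact Finset.sum_congr rfl fun k _ => mul_comm _ _
    calc (∑ s, |(∑ k, b s k * φ ω s k) - (∑ k, b' s k * φ ω s k)|)
        ≤ ∑ s, Q * ∑ k, |b s k - b' s k| := Finset.sum_le_sum fun s _ => hone s
      _ = Q * S := by rw [hSdef, Finset.mul_sum]
  -- per-ω bound
  have homega : ∀ ω : Fin Ω,
      |(∑ t, g ω t * ((∏ t' ∈ Finset.Iio t, (1 - logistic (∑ k, b t' k * φ ω t' k))) *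
            logistic (∑ k, b t k * φ ω t k))) -
       (∑ t, g ω t * ((∏ t' ∈ Finset.Iio t, (1 - logistic (∑ k, b' t' k * φ ω t' k))) *
            logistic (∑ k, b' t k * φ ω t k)))| ≤ (T : ℝ) * (Gbar * (Q * S)) := by
    intro ω
    rw [← Finset.sum_sub_distrib]
    refine le_trans (Finset.abs_sum_le_sum_abs _ _) ?_
    have hterm : ∀ t : Fin T,
        |g ω t * ((∏ t' ∈ Finset.Iio t, (1 - logistic (∑ k, b t' k * φ ω t' k))) *
            logistic (∑ k, b t k * φ ω t k)) -
         g ω t * ((∏ t' ∈ Finset.Iio t, (1 - logistic (∑ k, b' t' k * φ ω t' k))) *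
            logistic (∑ k, b' t k * φ ω t k))| ≤ Gbar * (Q * S) := by
      intro t
      rw [← mul_sub, abs_mul]
      have h1 : |g ω t| ≤ Gbar := by
        rw [abs_of_nonneg (hg ω t).1]; exact (hg ω t).2
      have h2 : |(∏ t' ∈ Finset.Iio t, (1 - logistic (∑ k, b t' k * φ ω t' k))) *
            logistic (∑ k, b t k * φ ω t k) -
          (∏ t' ∈ Finset.Iio t, (1 - logistic (∑ k, b' t' k * φ ω t' k))) *
            logistic (∑ k, b' t k * φ ω t k)| ≤ Q * S :=
        le_trans (step_bound T t (fun s => ∑ k, b s k * φ ω s k)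
          (fun s => ∑ k, b' s k * φ ω s k)) (hinner ω)
      exact mul_le_mul h1 h2 (abs_nonneg _) hG.le
    calc (∑ t, |g ω t * ((∏ t' ∈ Finset.Iio t, (1 - logistic (∑ k, b t' k * φ ω t' k))) *
            logistic (∑ k, b t k * φ ω t k)) -
         g ω t * ((∏ t' ∈ Finset.Iio t, (1 - logistic (∑ k, b' t' k * φ ω t' k))) *
            logistic (∑ k, b' t k * φ ω t k))|)
        ≤ ∑ _t : Fin T, Gbar * (Q * S) := Finset.sum_le_sum fun t _ => hterm t
      _ = (T : ℝ) * (Gbar * (Q * S)) := by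
          rw [Finset.sum_const, Finset.card_univ, Fintype.card_fin, nsmul_eq_mul]
  -- combine
  rw [← mul_sub, ← Finset.sum_sub_distrib, abs_mul]
  have hΩabs : |(1 / (Ω : ℝ))| = 1 / (Ω : ℝ) := by
    rw [abs_of_nonneg]; positivity
  rw [hΩabs]
  have hsum : |∑ ω, ((∑ t, g ω t * ((∏ t' ∈ Finset.Iio t, (1 - logistic (∑ k, b t' k * φ ω t' k))) *
            logistic (∑ k, b t k * φ ω t k))) -
       (∑ t, g ω t * ((∏ t' ∈ Finset.Iio t, (1 - logistic (∑ k, b' t' k * φ ω t' k))) *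
            logistic (∑ k, b' t k * φ ω t k))))| ≤ (Ω : ℝ) * ((T : ℝ) * (Gbar * (Q * S))) := by
    refine le_trans (Finset.abs_sum_le_sum_abs _ _) ?_
    calc (∑ ω, |(∑ t, g ω t * ((∏ t' ∈ Finset.Iio t, (1 - logistic (∑ k, b t' k * φ ω t' k))) *
            logistic (∑ k, b t k * φ ω t k))) -
       (∑ t, g ω t * ((∏ t' ∈ Finset.Iio t, (1 - logistic (∑ k, b' t' k * φ ω t' k))) *
            logistic (∑ k, b' t k * φ ω t k)))|)
        ≤ ∑ _ω : Fin Ω, (T : ℝ) * (Gbar * (Q * S)) := Finset.sum_le_sum fun ω _ => homega ω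
      _ = (Ω : ℝ) * ((T : ℝ) * (Gbar * (Q * S))) := by
          rw [Finset.sum_const, Finset.card_univ, Fintype.card_fin, nsmul_eq_mul]
  have hfinal : (1 / (Ω : ℝ)) * ((Ω : ℝ) * ((T : ℝ) * (Gbar * (Q * S))))
      ≤ Gbar * (T : ℝ) ^ 2 * Q * S := by
    rcases Nat.eq_zero_or_pos Ω with hΩ | hΩ
    · subst hΩ
      simp only [Nat.cast_zero, mul_zero, zero_mul, one_div, div_zero]
      have hT1 : (1 : ℝ) ≤ (T : ℝ) := by exact_mod_cast hT
      positivity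
    · have hΩ' : (0 : ℝ) < (Ω : ℝ) := by exact_mod_cast hΩ
      rw [one_div, inv_mul_cancel_left₀ (ne_of_gt hΩ')]
      have hT1 : (1 : ℝ) ≤ (T : ℝ) := by exact_mod_cast hT
      nlinarith [mul_nonneg hG.le hQS, sq_nonneg ((T:ℝ) - 1)]
  refine le_trans ?_ hfinal
  have hΩnn : 0 ≤ (1 / (Ω : ℝ)) := by positivity
  exact mul_le_mul_of_nonneg_left hsum hΩnn
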